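/- Let Ω be a compact Hausdorff topological space, E a normed vector space over ℂ, and Γ a set of continuous functions Ω → E that is closed under finite sums and under pointwise multiplication by continuous functions Ω → ℝ, and is closed in the uniform (sup-norm) topology. Let g : Ω → E be any function such that for every ω ∈ Ω and every ε > 0 there exist S ∈ Γ and an open neighborhood U of ω with ‖g(ω′) − S(ω′)‖ ≤ ε for all ω′ ∈ U. Then g belongs to Γ (in particular g is continuous). -/

import Mathlib

lemma gamma_sum {Ω : Type*} {E : Type*} [NormedAddCommGroup E]
    (Γ : Set (Ω → E))
    (hzero : (0 : Ω → E) ∈ Γ)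
    (hadd : ∀ f ∈ Γ, ∀ g ∈ Γ, f + g ∈ Γ)
    {ι : Type*} (T : Finset ι) (F : ι → Ω → E) (hF : ∀ i ∈ T, F i ∈ Γ) :
    (fun ω => ∑ i ∈ T, F i ω) ∈ Γ := by
  classical
  induction T using Finset.induction_on with
  | empty => simpa [Pi.zero_def] using hzero
  | insert _ _ hnot ih =>
    rename_i a T
    have : (fun ω => ∑ i ∈ insert a T, F i ω) = F a + fun ω => ∑ i ∈ T, F i ω := by
      funext ω; simp [Finset.sum_insert hnot]
    rw [this]
    exact hadd _ (hF a (Finset.mem_insert_self a T)) _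
      (ih fun i hi => hF i (Finset.mem_insert_of_mem hi))

/-- Let `Ω` be a compact Hausdorff space, `E` a normed complex vector space, and `Γ` a
set of continuous functions `Ω → E` closed under finite sums, under pointwise
multiplication by continuous real-valued functions, and closed in the uniform
topology. If `g : Ω → E` can, near every point and for every `ε > 0`, be
`ε`-approximated on a neighbourhood by an element of `Γ`, then `g ∈ Γ`. -/
theorem stmt9 {Ω : Type*} [TopologicalSpace Ω] [CompactSpace Ω] [T2Space Ω]
    {E : Type*} [NormedAddCommGroup E] [NormedSpace ℂ E]
    (Γ : Set (Ω → E))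
    (hcont : ∀ f ∈ Γ, Continuous f)
    (hzero : (0 : Ω → E) ∈ Γ)
    (hadd : ∀ f ∈ Γ, ∀ g ∈ Γ, f + g ∈ Γ)
    (hsmul : ∀ c : Ω → ℝ, Continuous c → ∀ f ∈ Γ, (fun ω => c ω • f ω) ∈ Γ)
    (hclosed : ∀ g : Ω → E, (∀ ε : ℝ, 0 < ε → ∃ S ∈ Γ, ∀ ω, ‖g ω - S ω‖ ≤ ε) → g ∈ Γ)
    (g : Ω → E)
    (hg : ∀ ω : Ω, ∀ ε : ℝ, 0 < ε → ∃ S ∈ Γ, ∃ U : Set Ω, IsOpen U ∧ ω ∈ U ∧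
      ∀ ω' ∈ U, ‖g ω' - S ω'‖ ≤ ε) :
    g ∈ Γ := by
  classical
  apply hclosed
  intro ε hε
  choose S hS U hUopen hmemU hest using fun ω => hg ω ε hε
  -- finite subcover
  obtain ⟨t, ht⟩ := IsCompact.elim_finite_subcover isCompact_univ U hUopen
    (fun ω _ => Set.mem_iUnion.2 ⟨ω, hmemU ω⟩)
  obtain ⟨f, hf⟩ := PartitionOfUnity.exists_isSubordinate (ι := t) (s := Set.univ)
    isClosed_univ (fun i => U i) (fun i => hUopen i)
    (by intro x _; simpa using Set.mem_iUnion₂.1 (ht (Set.mem_univ x)))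
  set T : Ω → E := fun ω => ∑ i : t, f i ω • S i ω with hT
  refine ⟨T, ?_, ?_⟩
  · exact gamma_sum Γ hzero hadd Finset.univ _
      (fun i _ => hsmul (f i) (f i).continuous _ (hS i))
  · intro ω
    have hsum : ∑ i : t, f i ω = 1 := by
      have := f.sum_eq_one (Set.mem_univ ω)
      rwa [finsum_eq_sum_of_fintype] at this
    have : g ω - T ω = ∑ i : t, f i ω • (g ω - S i ω) := by
      simp only [smul_sub, Finset.sum_sub_distrib, ← Finset.sum_smul, hsum, one_smul, hT]
    rw [this]
    calc ‖∑ i : t, f i ω • (g ω - S i ω)‖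
        ≤ ∑ i : t, ‖f i ω • (g ω - S i ω)‖ := norm_sum_le _ _
      _ ≤ ∑ i : t, f i ω * ε := by
          refine Finset.sum_le_sum fun i _ => ?_
          rw [norm_smul, Real.norm_eq_abs, abs_of_nonneg (f.nonneg i ω)]
          by_cases h : f i ω = 0
          · simp [h]
          · refine mul_le_mul_of_nonneg_left ?_ (f.nonneg i ω)
            exact hest i ω (hf i (subset_tsupport _ h))
      _ = ε := by rw [← Finset.sum_mul, hsum, one_mul]
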